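/- For all real p with 1/2 < p < 1, writing γ = p - 1/2, we have 1 - H(p) ≤ 4γ², where H(p) = -p·log₂(p) - (1-p)·log₂(1-p) is the binary entropy function. -/

import Mathlib

section Aux
open Real Filter

/-- Auxiliary function: `(1+s)·log(1+s) + (1-s)·log(1-s)`. -/
noncomputable def fAux (s : ℝ) : ℝ :=
  (1 + s) * Real.log (1 + s) + (1 - s) * Real.log (1 - s)

lemma hasSum_fAux {s : ℝ} (h0 : 0 ≤ s) (h1 : s < 1) :
    HasSum (fun k : ℕ => s ^ (2 * k + 2) / ((2 * k + 1) * (k + 1))) (fAux s) := by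
  have habs : |s| < 1 := by rwa [abs_of_nonneg h0]
  have h2 : |s ^ 2| < 1 := by
    rw [abs_of_nonneg (sq_nonneg s)]; nlinarith
  have A := (Real.hasSum_log_sub_log_of_abs_lt_one habs).mul_left s
  have B := (Real.hasSum_pow_div_log_of_abs_lt_one h2).neg
  have C := A.add B
  have hval : s * (Real.log (1 + s) - Real.log (1 - s)) + - -Real.log (1 - s ^ 2) = fAux s := by
    have hlog : Real.log (1 - s ^ 2) = Real.log (1 + s) + Real.log (1 - s) := by
      rw [← Real.log_mul (by nlinarith) (by nlinarith)]
      ring_nf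
    rw [hlog, fAux]; ring
  rw [hval] at C
  convert C using 2 with k
  · rfl
  have hk1 : ((2 * k : ℝ) + 1) ≠ 0 := by positivity
  have hk2 : ((k : ℝ) + 1) ≠ 0 := by positivity
  have hpow : (s ^ 2) ^ (k + 1) = s ^ (2 * k + 2) := by
    rw [← pow_mul]; ring_nf
  rw [hpow]
  field_simp
  ring

lemma fAux_mul_le {s t : ℝ} (hs : 0 ≤ s) (hst : s ≤ t) (ht : t < 1) :
    t ^ 2 * fAux s ≤ s ^ 2 * fAux t := by
  have hA := (hasSum_fAux hs (lt_of_le_of_lt hst ht)).mul_left (t ^ 2)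
  have hB := (hasSum_fAux (hs.trans hst) ht).mul_left (s ^ 2)
  refine hasSum_le (fun k => ?_) hA hB
  have hd : (0:ℝ) < (2 * k + 1) * (k + 1) := by positivity
  have h1 : t ^ 2 * s ^ (2 * k + 2) ≤ s ^ 2 * t ^ (2 * k + 2) := by
    have hpow : s ^ (2 * k) ≤ t ^ (2 * k) := pow_le_pow_left₀ hs hst _
    calc t ^ 2 * s ^ (2 * k + 2) = (s * t) ^ 2 * s ^ (2 * k) := by ring
      _ ≤ (s * t) ^ 2 * t ^ (2 * k) := by
          exact mul_le_mul_of_nonneg_left hpow (by positivity)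
      _ = s ^ 2 * t ^ (2 * k + 2) := by ring
  rw [mul_div_assoc', mul_div_assoc']
  exact div_le_div_of_nonneg_right h1 hd.le |>.trans_eq rfl

lemma fAux_le {s : ℝ} (hs : 0 ≤ s) (hs1 : s < 1) : fAux s ≤ 2 * Real.log 2 * s ^ 2 := by
  have hcont : Continuous fAux := by
    have : fAux = fun t => -Real.negMulLog (1 + t) - Real.negMulLog (1 - t) := by
      funext t
      simp [fAux, Real.negMulLog]
      ring
    rw [this]
    fun_prop
  have hf1 : fAux 1 = 2 * Real.log 2 := by
    simp [fAux, Real.log_zero]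
    norm_num
  have hT1 : Tendsto (fun t : ℝ => t ^ 2 * fAux s) (nhdsWithin 1 (Set.Iio 1)) (nhds (fAux s)) := by
    have : Tendsto (fun t : ℝ => t ^ 2 * fAux s) (nhds 1) (nhds (1 ^ 2 * fAux s)) := by
      exact (continuous_pow 2).continuousAt.mul continuousAt_const
    simpa using this.mono_left nhdsWithin_le_nhds
  have hT2 : Tendsto (fun t : ℝ => s ^ 2 * fAux t) (nhdsWithin 1 (Set.Iio 1))
      (nhds (s ^ 2 * (2 * Real.log 2))) := by
    have : Tendsto (fun t : ℝ => s ^ 2 * fAux t) (nhds 1) (nhds (s ^ 2 * fAux 1)) :=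
      continuousAt_const.mul hcont.continuousAt
    rw [hf1] at this
    exact this.mono_left nhdsWithin_le_nhds
  have hev : ∀ᶠ t in nhdsWithin 1 (Set.Iio 1), t ^ 2 * fAux s ≤ s ^ 2 * fAux t := by
    filter_upwards [Ioo_mem_nhdsLT_of_mem (Set.mem_Ioc.mpr ⟨hs1, le_refl 1⟩)] with t ht
    exact fAux_mul_le hs ht.1.le ht.2
  have := le_of_tendsto_of_tendsto hT1 hT2 hev
  linarith [this]

end Aux

/-- Binary entropy function. -/
noncomputable def binEntropy (p : ℝ) : ℝ :=
  -p * Real.logb 2 p - (1 - p) * Real.logb 2 (1 - p)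

theorem one_sub_binEntropy_le (p : ℝ) (hp : 1/2 < p) (hp1 : p < 1) :
    1 - binEntropy p ≤ 4 * (p - 1/2) ^ 2 := by
  have hp0 : 0 < p := by linarith
  have hq0 : 0 < 1 - p := by linarith
  have hs0 : (0:ℝ) ≤ 2 * p - 1 := by linarith
  have hs1 : 2 * p - 1 < 1 := by linarith
  have key := fAux_le hs0 hs1
  have hfe : fAux (2 * p - 1) =
      2 * Real.log 2 + 2 * p * Real.log p + 2 * (1 - p) * Real.log (1 - p) := by
    have h1 : 1 + (2 * p - 1) = 2 * p := by ring
    have h2 : 1 - (2 * p - 1) = 2 * (1 - p) := by ring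
    rw [fAux, h1, h2, Real.log_mul two_ne_zero hp0.ne', Real.log_mul two_ne_zero hq0.ne']
    ring
  rw [hfe] at key
  have hlog2 : (0:ℝ) < Real.log 2 := Real.log_pos (by norm_num)
  have hbe : 1 - binEntropy p =
      (Real.log 2 + p * Real.log p + (1 - p) * Real.log (1 - p)) / Real.log 2 := by
    rw [binEntropy, Real.logb, Real.logb]
    field_simp
    ring
  rw [hbe, div_le_iff₀ hlog2]
  nlinarith [key]
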